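/- Let G be a finite group, O a transfer system on G, J ≤ H ≤ G subgroups, and T a finite H-set such that for every t ∈ T the stabilizer Stab_H(t) is O-admissible in H. Let ‖J‖_O denote the maximum of the indices [J : L] over all subgroups L ≤ J with L ⊆_O J (a maximum over a nonempty set, since J ⊆_O J). Then |T| ≤ ‖J‖_O · N, where N is the number of orbits of the restricted action of J on T. -/

import Mathlib

/-- For a transfer system `O` on a finite group `G`, subgroups `J ≤ H ≤ G`,
and a finite `H`-set `T` all of whose `H`-stabilizers are `O`-admissible in `H`, we have
`|T| ≤ ‖J‖_O · N` where `‖J‖_O` is the maximum of the indices `[J : L]` over subgroups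
`L` with `L ⊆_O J`, and `N` is the number of orbits of the restricted `J`-action on `T`. -/
theorem stmt_5 {G : Type*} [Group G] [Finite G]
    (O : Subgroup G → Subgroup G → Prop)
    (hrefl : ∀ H : Subgroup G, O H H)
    (htrans : ∀ ⦃K L H : Subgroup G⦄, O K L → O L H → O K H)
    (hrefines : ∀ ⦃K H : Subgroup G⦄, O K H → K ≤ H)
    (hconj : ∀ (g : G) ⦃K H : Subgroup G⦄, O K H →
      O (Subgroup.map (MulAut.conj g).toMonoidHom K)
        (Subgroup.map (MulAut.conj g).toMonoidHom H))
    (hres : ∀ ⦃K H : Subgroup G⦄, O K H → ∀ ⦃J : Subgroup G⦄, J ≤ H → O (K ⊓ J) J)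
    (J H : Subgroup G) (hJH : J ≤ H)
    (T : Type*) [Finite T] [MulAction H T]
    (hstab : ∀ t : T, O (Subgroup.map H.subtype (MulAction.stabilizer H t)) H)
    (normJ : ℕ)
    (hnorm : IsGreatest {m : ℕ | ∃ L : Subgroup G, O L J ∧ Subgroup.relIndex L J = m} normJ) :
    Nat.card T ≤ normJ * Nat.card (MulAction.orbitRel.Quotient (J.subgroupOf H) T) := by
  classical
  set J' := J.subgroupOf H with hJ'
  -- per-orbit bound
  have key : ∀ t : T, Nat.card (MulAction.orbit J' t) ≤ normJ := by
    intro t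
    set L : Subgroup G := Subgroup.map H.subtype (MulAction.stabilizer H t) ⊓ J with hL
    have hOL : O L J := hres (hstab t) hJH
    have hle : Subgroup.relIndex L J ≤ normJ := hnorm.2 ⟨L, hOL, rfl⟩
    let e : J' ≃* J := Subgroup.subgroupOfEquivOfLe hJH
    have hstabeq : MulAction.stabilizer J' t
        = (L.subgroupOf J).comap e.toMonoidHom := by
      ext x
      simp only [MulAction.mem_stabilizer_iff, Subgroup.mem_comap,
        Subgroup.mem_subgroupOf, hL, Subgroup.mem_inf, Subgroup.mem_map,
        Subgroup.coe_subtype, Subgroup.subgroupOfEquivOfLe_apply_coe]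
      rw [show ((e.toMonoidHom x : J) : G) = ((x : H) : G) from rfl]
      constructor
      · intro hx
        refine ⟨⟨(x : H), ?_, rfl⟩, (e x).2⟩
        exact hx
      · rintro ⟨⟨h, hh, hhx⟩, -⟩
        have : h = (x : H) := Subtype.ext hhx
        subst this
        exact hh
    have hidx : (MulAction.stabilizer J' t).index = Subgroup.relIndex L J := by
      rw [hstabeq, Subgroup.index_comap_of_surjective _ e.surjective]
      rfl
    calc Nat.card (MulAction.orbit J' t)
        = (MulAction.orbit J' t).ncard := Nat.card_coe_set_eq _
      _ = (MulAction.stabilizer J' t).index := (MulAction.index_stabilizer J' t).symm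
      _ = Subgroup.relIndex L J := hidx
      _ ≤ normJ := hle
  -- sum over orbits
  have := Fintype.ofFinite T
  rw [Nat.card_congr (MulAction.selfEquivSigmaOrbits' J' T)]
  rw [Nat.card_eq_fintype_card, Fintype.card_sigma]
  have : ∀ ω : MulAction.orbitRel.Quotient J' T, Fintype.card ω.orbit ≤ normJ := by
    intro ω
    refine Quotient.inductionOn' ω ?_
    intro t
    rw [← Nat.card_eq_fintype_card, MulAction.orbitRel.Quotient.orbit_mk]
    exact key t
  calc ∑ ω : MulAction.orbitRel.Quotient J' T, Fintype.card ω.orbit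
      ≤ ∑ _ω : MulAction.orbitRel.Quotient J' T, normJ :=
        Finset.sum_le_sum fun ω _ => this ω
    _ = Fintype.card (MulAction.orbitRel.Quotient J' T) * normJ := by
        simp [Finset.sum_const, Finset.card_univ, Nat.smul_one_eq_cast]
    _ = normJ * Nat.card (MulAction.orbitRel.Quotient J' T) := by
        rw [Nat.card_eq_fintype_card, Nat.mul_comm]
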